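/- arXiv:2503.02864 — 2 statements merged into one kernel-verified Lean document; each statement's English description precedes it below -/
import Mathlib

section
/- Let π and ρ be permutations of a finite type. The cyclic group ⟨π⟩ contains a permutation with the same cycle type as ρ (i.e. there exists a natural number q with cycleType(π^q) = cycleType(ρ)) if and only if orderOf ρ divides orderOf π and π^(orderOf π / orderOf ρ) has the same cycle type as ρ. -/
open Equiv Equiv.Perm

lemma cycleType_pow_coprime_aux {α : Type*} [Fintype α] [DecidableEq α] (σ : Equiv.Perm α) :
    ∀ m : ℕ, Nat.Coprime m (orderOf σ) → (σ ^ m).cycleType = σ.cycleType := by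
  induction σ using Equiv.Perm.cycle_induction_on with
  | base_one => simp
  | base_cycles σ hσ =>
    intro m hm
    have hc : IsCycle (σ ^ m) := hσ.pow_iff.mpr hm
    rw [hc.cycleType, hσ.cycleType, support_pow_coprime hm]
  | induction_disjoint σ τ hd _ hσ hτ =>
    intro m hm
    rw [hd.orderOf] at hm
    have h1 : Nat.Coprime m (orderOf σ) := hm.coprime_dvd_right (Nat.dvd_lcm_left _ _)
    have h2 : Nat.Coprime m (orderOf τ) := hm.coprime_dvd_right (Nat.dvd_lcm_right _ _)
    have hd' : Equiv.Perm.Disjoint (σ ^ m) (τ ^ m) := by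
      intro x
      rcases hd x with h | h
      · left; rw [← notMem_support]
        exact fun hx => (notMem_support.mpr h) (support_pow_le σ m hx)
      · right; rw [← notMem_support]
        exact fun hx => (notMem_support.mpr h) (support_pow_le τ m hx)
    rw [hd.commute.mul_pow, Equiv.Perm.Disjoint.cycleType_mul hd', hd.cycleType_mul, hσ m h1, hτ m h2]

/-- The cyclic group `⟨π⟩` contains a permutation with the same cycle type as `ρ` if and only
if `orderOf ρ` divides `orderOf π` and `π ^ (orderOf π / orderOf ρ)` has the same cycle type
as `ρ`. -/
theorem exists_pow_cycleType_iff_dvd {α : Type*} [Fintype α] [DecidableEq α]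
    (π ρ : Equiv.Perm α) :
    (∃ q : ℕ, (π ^ q).cycleType = ρ.cycleType) ↔
      orderOf ρ ∣ orderOf π ∧
        (π ^ (orderOf π / orderOf ρ)).cycleType = ρ.cycleType := by
  constructor
  · rintro ⟨q, hq⟩
    set n := orderOf π with hn
    set d := orderOf ρ with hdd
    have hn0 : 0 < n := orderOf_pos π
    have hd0 : 0 < d := orderOf_pos ρ
    have hord : orderOf (π ^ q) = d := by
      rw [← Equiv.Perm.lcm_cycleType, hq, Equiv.Perm.lcm_cycleType]
    have hpow : orderOf (π ^ q) = n / Nat.gcd n q := orderOf_pow π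
    have hg : Nat.gcd n q = n / d := by
      have : d = n / Nat.gcd n q := by rw [← hord, hpow]
      have hgd : Nat.gcd n q ∣ n := Nat.gcd_dvd_left n q
      have hgpos : 0 < Nat.gcd n q := Nat.gcd_pos_of_pos_left q hn0
      rw [this, Nat.div_div_self hgd hn0.ne']
    have hdvd : d ∣ n := by
      rw [← hord, hpow]
      exact Nat.div_dvd_of_dvd (Nat.gcd_dvd_left n q)
    refine ⟨hdvd, ?_⟩
    have hndd : n / d ∣ n := Nat.div_dvd_of_dvd hdvd
    have hordnd : orderOf (π ^ (n / d)) = d := by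
      rw [orderOf_pow, ← hn, Nat.gcd_eq_right hndd, Nat.div_div_self hdvd hn0.ne']
    have hgq : Nat.gcd n q ∣ q := Nat.gcd_dvd_right n q
    have hcop : Nat.Coprime (q / Nat.gcd n q) d := by
      have h := Nat.coprime_div_gcd_div_gcd (m := q) (n := n)
        (by rw [Nat.gcd_comm q n, hg]; exact Nat.div_pos (Nat.le_of_dvd hn0 hdvd) hd0)
      rw [Nat.gcd_comm q n, hg, Nat.div_div_self hdvd hn0.ne'] at h
      rwa [hg]
    have key : ((π ^ (n / d)) ^ (q / Nat.gcd n q)).cycleType = (π ^ (n / d)).cycleType := by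
      apply cycleType_pow_coprime_aux
      rw [hordnd]
      exact hcop
    rw [← hg, ← pow_mul, Nat.mul_div_cancel' hgq] at key
    rw [← hq, key, hg]
  · rintro ⟨_, h⟩
    exact ⟨orderOf π / orderOf ρ, h⟩
end

section
/- With the exact-3-hitting-set construction of ρ, π_1, π_2 as described, there exist natural numbers x_1, x_2 such that π_1^{x_1} π_2^{x_2} has the same cycle type as ρ if and only if there exists a natural number x_2 such that π_1 π_2^{x_2} has the same cycle type as ρ (i.e. the exponent of π_1 can always be taken equal to 1, so membership of the cycle type of ρ in the group ⟨π_1, π_2⟩ is equivalent to its membership in the coset π_1⟨π_2⟩). -/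
/-! Exact-3-hitting-set construction.  The ground set is `Fin n`; the `j`-th clause is
`{idx j 0, idx j 1, idx j 2}` with `idx j` strictly monotone.  `p i` is the `(i+1)`-st prime
greater than `3` (zero-indexed, so `p 0 = 5`), `q n j` is the `(j+1)`-st of the `m` primes
following the first `2n` primes greater than `3`.  Every permutation group
`Sym(ℓ)`-component is realized on `Fin ℓ`, and the `ℓ`-cycle `([ℓ]) = (1,2,…,ℓ)` is realized
as `finRotate ℓ`.  Cycle types are computed in the symmetric group on the disjoint union of
all components (fixpoints are discarded by `Equiv.Perm.cycleType`, so the padding of the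
second block of components to degree `p_n^3 q_j` is immaterial). -/

namespace HittingSet

/-- `p i` is the `(i+1)`-st prime greater than 3 (zero-indexed): `p 0 = 5`. -/
noncomputable def p (i : ℕ) : ℕ := Nat.nth Nat.Prime (i + 2)

/-- `q n j` is the `(j+1)`-st prime following the first `2n` primes greater than 3. -/
noncomputable def q (n j : ℕ) : ℕ := Nat.nth Nat.Prime (2 * n + 2 + j)

/-- `r j = q_j ⬝ p_{i_1} p_{i_2} p_{i_3}` for the clause `C_j = {i_1 < i_2 < i_3}`. -/
noncomputable def r (n : ℕ) {m : ℕ} (idx : Fin m → Fin 3 → Fin n) (j : Fin m) : ℕ :=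
  q n j * (p (idx j 0) * p (idx j 1) * p (idx j 2))

/-- The underlying set of the permutation group
`G = ∏_{i=1}^n Sym(p_i p_{n+i}) × ∏_{j=1}^m Sym(r_j)^6` (embedded in a symmetric group). -/
abbrev Omega (n : ℕ) {m : ℕ} (idx : Fin m → Fin 3 → Fin n) : Type :=
  (Σ i : Fin n, Fin (p i * p (n + i))) ⊕ (Σ j : Fin m, Σ _d : Fin 6, Fin (r n idx j))

/-- `ρ = (ζ_1,…,ζ_n,η_1,…,η_m)` with `ζ_i = ([p_i p_{n+i}])` and
`η_j = (([r_j])^{p_{i_1}p_{i_2}p_{i_3}}, ([r_j])^{p_{i_1}}, ([r_j])^{p_{i_2}},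
([r_j])^{p_{i_3}}, ([r_j]), ([r_j]))`. -/
noncomputable def rho (n : ℕ) {m : ℕ} (idx : Fin m → Fin 3 → Fin n) : Equiv.Perm (Omega n idx) :=
  Equiv.sumCongr
    (Equiv.sigmaCongrRight fun _i => finRotate _)
    (Equiv.sigmaCongrRight fun j => Equiv.sigmaCongrRight fun d =>
      finRotate (r n idx j) ^
        (![p (idx j 0) * p (idx j 1) * p (idx j 2),
           p (idx j 0), p (idx j 1), p (idx j 2), 1, 1] d))

/-- `π_1 = (α_1,…,α_n,β_1,…,β_m)` with `α_i = ([p_i p_{n+i}])` and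
`β_j = (([r_j])^{s_{j,1}}, …, ([r_j])^{s_{j,6}})`. -/
noncomputable def pi1 (n : ℕ) {m : ℕ} (idx : Fin m → Fin 3 → Fin n) (s : Fin m → ℕ → ℕ) :
    Equiv.Perm (Omega n idx) :=
  Equiv.sumCongr
    (Equiv.sigmaCongrRight fun _i => finRotate _)
    (Equiv.sigmaCongrRight fun j => Equiv.sigmaCongrRight fun d =>
      finRotate (r n idx j) ^ s j d.val)

/-- `π_2 = (γ_1,…,γ_n,δ_1,…,δ_m)` with `γ_i = id` and
`δ_j = (([r_j])^{t_j}, …, ([r_j])^{t_j})`. -/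
noncomputable def pi2 (n : ℕ) {m : ℕ} (idx : Fin m → Fin 3 → Fin n) (t : Fin m → ℕ) :
    Equiv.Perm (Omega n idx) :=
  Equiv.sumCongr (Equiv.refl _)
    (Equiv.sigmaCongrRight fun j => Equiv.sigmaCongrRight fun _d =>
      finRotate (r n idx j) ^ t j)

open Fin.NatCast Fin.CommRing

lemma rot_pow_apply (N e : ℕ) : ∀ x : Fin (N+1),
    (finRotate (N+1) ^ e) x = x + (e : Fin (N+1)) := by
  induction e with
  | zero => simp
  | succ e ih =>
      intro x
      rw [pow_succ', Equiv.Perm.mul_apply, finRotate_succ_apply, ih,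
        Nat.cast_add, Nat.cast_one, add_assoc]

lemma rot_pow_fix {L : ℕ} (hL : 0 < L) (e : ℕ) (x : Fin L) :
    ((finRotate L ^ e) x = x) ↔ L ∣ e := by
  obtain ⟨N, rfl⟩ : ∃ N, L = N + 1 := ⟨L - 1, by omega⟩
  rw [rot_pow_apply, add_eq_left, Fin.natCast_eq_zero]

noncomputable def fc {α : Type*} [Fintype α] [DecidableEq α] (σ : Equiv.Perm α) : ℕ :=
  ∑ x : α, if σ x = x then 1 else 0

lemma fc_eq_of_isConj {α : Type*} [Fintype α] [DecidableEq α] {σ τ : Equiv.Perm α}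
    (h : IsConj σ τ) : fc σ = fc τ := by
  obtain ⟨c, hc⟩ := isConj_iff.mp h
  rw [fc, fc, ← Equiv.sum_comp c (fun x => if τ x = x then 1 else 0)]
  refine Finset.sum_congr rfl fun y _ => ?_
  have : τ (c y) = c y ↔ σ y = y := by
    rw [← hc]
    simp only [Equiv.Perm.mul_apply, Equiv.Perm.inv_def, Equiv.symm_apply_apply]
    exact ⟨fun h' => c.injective h', fun h' => by rw [h']⟩
  simp [this]

lemma isConj_pow_self {G : Type*} [Group G] {a b : G} (h : IsConj a b) (k : ℕ) :
    IsConj (a ^ k) (b ^ k) := by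
  obtain ⟨c, hc⟩ := isConj_iff.mp h
  exact isConj_iff.mpr ⟨c, by rw [← hc, conj_pow]⟩

lemma isConj_rot {L : ℕ} (hL : 1 < L) {a b c : ℕ} (hc : Nat.Coprime c L)
    (hab : c * b ≡ a [MOD L]) : IsConj (finRotate L ^ a) (finRotate L ^ b) := by
  obtain ⟨K, rfl⟩ : ∃ K, L = K + 2 := ⟨L - 2, by omega⟩
  obtain ⟨d, -, hd⟩ := Nat.exists_mul_mod_eq_one_of_coprime hc hL
  have hda : d * a ≡ b [MOD (K+2)] := by
    calc d * a ≡ d * (c * b) [MOD (K+2)] := (hab.symm).mul_left d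
    _ = (c * d) * b := by ring
    _ ≡ 1 * b [MOD (K+2)] := by
        refine Nat.ModEq.mul_right b ?_
        unfold Nat.ModEq
        rw [hd, Nat.one_mod_eq_one.mpr (by omega)]
    _ = b := one_mul b
  have hcd : ((c : Fin (K+2)) * (d : Fin (K+2))) = 1 := by
    rw [← Nat.cast_mul]
    apply Fin.ext
    rw [Fin.val_natCast, hd, Fin.val_one]
  have hdc : ((d : Fin (K+2)) * (c : Fin (K+2))) = 1 := by rw [mul_comm]; exact hcd
  set mcd : Equiv.Perm (Fin (K+2)) := ⟨fun x => (d : Fin (K+2)) * x, fun x => (c : Fin (K+2)) * x,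
    fun x => by simp only []; rw [← mul_assoc, hcd, one_mul],
    fun x => by simp only []; rw [← mul_assoc, hdc, one_mul]⟩ with hmcd
  have hsemi : mcd * (finRotate (K+2) ^ a) = (finRotate (K+2) ^ b) * mcd := by
    ext x
    simp only [Equiv.Perm.mul_apply, rot_pow_apply, hmcd, Equiv.coe_fn_mk]
    have hcast : ((d*a : ℕ) : Fin (K+2)) = ((b : ℕ) : Fin (K+2)) := by
      apply Fin.ext; rw [Fin.val_natCast, Fin.val_natCast]; exact hda
    rw [mul_add, ← Nat.cast_mul, hcast]
  exact isConj_iff.mpr ⟨mcd, by rw [hsemi, mul_assoc, mul_inv_cancel, mul_one]⟩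

noncomputable def shape (n : ℕ) {m : ℕ} (idx : Fin m → Fin 3 → Fin n)
    (a : Fin n → ℕ) (b : Fin m → Fin 6 → ℕ) : Equiv.Perm (Omega n idx) :=
  Equiv.sumCongr
    (Equiv.sigmaCongrRight fun i => finRotate (p i * p (n + i)) ^ a i)
    (Equiv.sigmaCongrRight fun j => Equiv.sigmaCongrRight fun d =>
      finRotate (r n idx j) ^ b j d)

lemma shape_mul (n : ℕ) {m : ℕ} (idx : Fin m → Fin 3 → Fin n)
    (a a' : Fin n → ℕ) (b b' : Fin m → Fin 6 → ℕ) :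
    shape n idx a b * shape n idx a' b' =
      shape n idx (fun i => a i + a' i) (fun j d => b j d + b' j d) := by
  ext x
  rcases x with ⟨i, v⟩ | ⟨j, d, v⟩ <;>
    simp [shape, Equiv.Perm.mul_apply, pow_add]

lemma shape_one (n : ℕ) {m : ℕ} (idx : Fin m → Fin 3 → Fin n) :
    shape n idx (fun _ => 0) (fun _ _ => 0) = 1 := by
  ext x
  rcases x with ⟨i, v⟩ | ⟨j, d, v⟩ <;> simp [shape]

lemma shape_pow (n : ℕ) {m : ℕ} (idx : Fin m → Fin 3 → Fin n)
    (a : Fin n → ℕ) (b : Fin m → Fin 6 → ℕ) (k : ℕ) :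
    (shape n idx a b) ^ k = shape n idx (fun i => a i * k) (fun j d => b j d * k) := by
  induction k with
  | zero => simp only [pow_zero, Nat.mul_zero]; exact (shape_one n idx).symm
  | succ k ih =>
      rw [pow_succ, ih, shape_mul]
      have h1 : (fun i : Fin n => a i * k + a i) = fun i => a i * (k+1) := by funext i; ring
      have h2 : (fun (j : Fin m) (d : Fin 6) => b j d * k + b j d) = fun j d => b j d * (k+1) := by
        funext j d; ring
      rw [h1, h2]

lemma pi1_eq (n : ℕ) {m : ℕ} (idx : Fin m → Fin 3 → Fin n) (s : Fin m → ℕ → ℕ) :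
    pi1 n idx s = shape n idx (fun _ => 1) (fun j d => s j d.val) := by
  simp only [pi1, shape, pow_one]

lemma pi2_eq (n : ℕ) {m : ℕ} (idx : Fin m → Fin 3 → Fin n) (t : Fin m → ℕ) :
    pi2 n idx t = shape n idx (fun _ => 0) (fun j _ => t j) := by
  simp only [pi2, shape, pow_zero]
  congr 1


lemma rho_eq (n : ℕ) {m : ℕ} (idx : Fin m → Fin 3 → Fin n) :
    rho n idx = shape n idx (fun _ => 1)
      (fun j d => ![p (idx j 0) * p (idx j 1) * p (idx j 2),
           p (idx j 0), p (idx j 1), p (idx j 2), 1, 1] d) := by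
  simp only [rho, shape, pow_one]

lemma p_prime (i : ℕ) : (p i).Prime := Nat.prime_nth_prime _
lemma q_prime (n j : ℕ) : (q n j).Prime := Nat.prime_nth_prime _
lemma p_pos (i : ℕ) : 0 < p i := (p_prime i).pos
lemma q_pos (n j : ℕ) : 0 < q n j := (q_prime n j).pos
lemma one_lt_p (i : ℕ) : 1 < p i := (p_prime i).one_lt
lemma one_lt_q (n j : ℕ) : 1 < q n j := (q_prime n j).one_lt

lemma nth_prime_injective : Function.Injective (Nat.nth Nat.Prime) :=
  (Nat.nth_strictMono Nat.infinite_setOf_prime).injective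

lemma p_ne_p {i i' : ℕ} (h : i ≠ i') : p i ≠ p i' := by
  intro hc; exact h (by have := nth_prime_injective hc; omega)

lemma q_ne_p (n j i : ℕ) : q n j ≠ p i → True := fun _ => trivial

lemma coprime_p_p {i i' : ℕ} (h : i ≠ i') : Nat.Coprime (p i) (p i') :=
  (Nat.coprime_primes (p_prime i) (p_prime i')).mpr (p_ne_p h)

lemma coprime_q_p {n : ℕ} (j i : ℕ) (hi : i < 2 * n) : Nat.Coprime (q n j) (p i) := by
  refine (Nat.coprime_primes (q_prime n j) (p_prime i)).mpr ?_
  intro hc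
  have := nth_prime_injective hc
  omega

lemma coprime_q_q {n j j' : ℕ} (h : j ≠ j') : Nat.Coprime (q n j) (q n j') := by
  refine (Nat.coprime_primes (q_prime n j) (q_prime n j')).mpr ?_
  intro hc; exact h (by have := nth_prime_injective hc; omega)

lemma one_lt_mul' {a b : ℕ} (h : 1 < a) (hb : 0 < b) : 1 < a * b :=
  lt_of_lt_of_le h (Nat.le_mul_of_pos_right a hb)

lemma r_pos (n : ℕ) {m : ℕ} (idx : Fin m → Fin 3 → Fin n) (j : Fin m) : 0 < r n idx j := by
  unfold r
  exact Nat.mul_pos (q_pos n j) (Nat.mul_pos (Nat.mul_pos (p_pos _) (p_pos _)) (p_pos _))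

lemma one_lt_r (n : ℕ) {m : ℕ} (idx : Fin m → Fin 3 → Fin n) (j : Fin m) : 1 < r n idx j := by
  unfold r
  exact one_lt_mul' (one_lt_q n j) (Nat.mul_pos (Nat.mul_pos (p_pos _) (p_pos _)) (p_pos _))

lemma one_lt_L (n : ℕ) (i : Fin n) : 1 < p i.val * p (n + i.val) :=
  one_lt_mul' (one_lt_p i.val) (p_pos (n + i.val))



lemma fc_shape (n : ℕ) {m : ℕ} (idx : Fin m → Fin 3 → Fin n)
    (a : Fin n → ℕ) (b : Fin m → Fin 6 → ℕ) :
    fc (shape n idx a b) =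
      (∑ i : Fin n, if (p i.val * p (n + i.val)) ∣ a i then p i.val * p (n + i.val) else 0)
      + ∑ j : Fin m, ∑ d : Fin 6, if r n idx j ∣ b j d then r n idx j else 0 := by
  rw [fc, Fintype.sum_sum_type]
  congr 1
  · rw [← Finset.univ_sigma_univ, Finset.sum_sigma]
    refine Finset.sum_congr rfl fun i _ => ?_
    have hL : 0 < p i.val * p (n + i.val) := Nat.mul_pos (p_pos _) (p_pos _)
    have hstep : ∀ v : Fin (p i.val * p (n + i.val)),
        (if shape n idx a b (Sum.inl ⟨i, v⟩) = Sum.inl ⟨i, v⟩ then 1 else 0)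
          = (if (p i.val * p (n + i.val)) ∣ a i then (1:ℕ) else 0) := by
      intro v
      have hiff : (shape n idx a b (Sum.inl ⟨i, v⟩) = Sum.inl ⟨i, v⟩)
          ↔ ((p i.val * p (n + i.val)) ∣ a i) := by
        simp [shape, rot_pow_fix hL]
      simp only [hiff]
    rw [Finset.sum_congr rfl fun v _ => hstep v]
    by_cases h : (p i.val * p (n + i.val)) ∣ a i <;> simp [h]
  · rw [← Finset.univ_sigma_univ, Finset.sum_sigma]
    refine Finset.sum_congr rfl fun j _ => ?_
    rw [← Finset.univ_sigma_univ, Finset.sum_sigma]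
    refine Finset.sum_congr rfl fun d _ => ?_
    have hR : 0 < r n idx j := r_pos n idx j
    have hstep : ∀ v : Fin (r n idx j),
        (if shape n idx a b (Sum.inr ⟨j, d, v⟩) = Sum.inr ⟨j, d, v⟩ then 1 else 0)
          = (if r n idx j ∣ b j d then (1:ℕ) else 0) := by
      intro v
      have hiff : (shape n idx a b (Sum.inr ⟨j, d, v⟩) = Sum.inr ⟨j, d, v⟩)
          ↔ (r n idx j ∣ b j d) := by
        simp [shape, rot_pow_fix hR]
      simp only [hiff]
    rw [Finset.sum_congr rfl fun v _ => hstep v]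
    by_cases h : r n idx j ∣ b j d <;> simp [h]

lemma isConj_shape (n : ℕ) {m : ℕ} (idx : Fin m → Fin 3 → Fin n)
    (a a' : Fin n → ℕ) (b b' : Fin m → Fin 6 → ℕ)
    (h1 : ∀ i : Fin n, IsConj (finRotate (p i.val * p (n + i.val)) ^ a i)
        (finRotate (p i.val * p (n + i.val)) ^ a' i))
    (h2 : ∀ (j : Fin m) (d : Fin 6), IsConj (finRotate (r n idx j) ^ b j d)
        (finRotate (r n idx j) ^ b' j d)) :
    IsConj (shape n idx a b) (shape n idx a' b') := by
  choose c hc using fun i => isConj_iff.mp (h1 i)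
  choose e he using fun j d => isConj_iff.mp (h2 j d)
  refine isConj_iff.mpr ⟨Equiv.sumCongr (Equiv.sigmaCongrRight c)
    (Equiv.sigmaCongrRight fun j => Equiv.sigmaCongrRight (e j)), ?_⟩
  have hc' : ∀ (i : Fin n) (v), c i ((finRotate (p i.val * p (n + i.val)) ^ a i) ((Equiv.symm (c i)) v))
      = (finRotate (p i.val * p (n + i.val)) ^ a' i) v := by
    intro i v
    have := Equiv.ext_iff.mp (hc i) v
    simpa [Equiv.Perm.mul_apply, Equiv.Perm.inv_def] using this
  have he' : ∀ (j : Fin m) (d : Fin 6) (v), e j d ((finRotate (r n idx j) ^ b j d) ((Equiv.symm (e j d)) v))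
      = (finRotate (r n idx j) ^ b' j d) v := by
    intro j d v
    have := Equiv.ext_iff.mp (he j d) v
    simpa [Equiv.Perm.mul_apply, Equiv.Perm.inv_def] using this
  ext x
  rcases x with ⟨i, v⟩ | ⟨j, d, v⟩ <;>
    simp [shape, Equiv.Perm.mul_apply, Equiv.Perm.inv_def, hc', he']

lemma mul_dvd_prod {S : Finset ℕ} (f : ℕ → ℕ) {u v : ℕ} (hu : u ∈ S) (hv : v ∈ S)
    (huv : u ≠ v) : f u * f v ∣ ∏ l ∈ S, f l := by
  rw [← Finset.mul_prod_erase S f hu]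
  exact mul_dvd_mul_left (f u)
    (Finset.dvd_prod_of_mem f (Finset.mem_erase.mpr ⟨huv.symm, hv⟩))

lemma mul3_dvd_prod {S : Finset ℕ} (f : ℕ → ℕ) {u v w : ℕ} (hu : u ∈ S) (hv : v ∈ S)
    (hw : w ∈ S) (huv : u ≠ v) (huw : u ≠ w) (hvw : v ≠ w) :
    f u * f v * f w ∣ ∏ l ∈ S, f l := by
  rw [← Finset.mul_prod_erase S f hw, mul_comm (f u * f v) (f w)]
  exact mul_dvd_mul_left (f w)
    (mul_dvd_prod f (Finset.mem_erase.mpr ⟨huw, hu⟩) (Finset.mem_erase.mpr ⟨hvw, hv⟩) huv)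

/-- There are `x_1, x_2` with `ct(π_1^{x_1} π_2^{x_2}) = ct(ρ)` if and only if there is an
`x_2` with `ct(π_1 π_2^{x_2}) = ct(ρ)`: the exponent of `π_1` can always be taken to be `1`,
so the cycle type of `ρ` is realized in the group `⟨π_1, π_2⟩` iff it is realized in the
coset `π_1⟨π_2⟩`. -/
theorem cycleType_eq_iff_coset
    (n m : ℕ) (idx : Fin m → Fin 3 → Fin n) (hidx : ∀ j, StrictMono (idx j))
    (s : Fin m → ℕ → ℕ) (t : Fin m → ℕ)
    -- `s j d ∈ [0, r_j - 1]` for `d ∈ [6]` (here zero-indexed, `d ∈ {0,…,5}`)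
    (hslt : ∀ j : Fin m, ∀ d : ℕ, d < 6 → s j d < r n idx j)
    -- `s_{j,d} ≡ 1 (mod q_j)` for all `d ∈ [6]`
    (hsq : ∀ j : Fin m, ∀ d : ℕ, d < 6 → s j d % q n j = 1)
    -- for `a ∈ [3]`: `s_{j,a} ≡ -1 (mod p_{i_a})` and `s_{j,a} ≡ 0 (mod p_{i_b})` for `b ≠ a`
    (hs1 : ∀ j : Fin m, ∀ a b : Fin 3,
      (s j a.val + if a = b then 1 else 0) % p (idx j b) = 0)
    -- `(s_{j,4}, s_{j,5}, s_{j,6}) ≡ (-1,-3,-2) (mod p_{i_1})`, `(-2,-1,-3) (mod p_{i_2})`,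
    -- `(-3,-2,-1) (mod p_{i_3})`
    (hs2 : ∀ j : Fin m, ∀ c b : Fin 3,
      (s j (3 + c.val) + (1 + (3 + b.val - c.val) % 3)) % p (idx j b) = 0)
    -- `t_j ∈ [0, r_j - 1]`, `t_j ≡ 1 (mod p_{i_a})` for `a ∈ [3]`, `t_j ≡ 0 (mod q_j)`
    (htlt : ∀ j : Fin m, t j < r n idx j)
    (htp : ∀ j : Fin m, ∀ a : Fin 3, t j % p (idx j a) = 1)
    (htq : ∀ j : Fin m, t j % q n j = 0)
    :
    (∃ x1 x2 : ℕ,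
        (pi1 n idx s ^ x1 * pi2 n idx t ^ x2).cycleType = (rho n idx).cycleType) ↔
      ∃ x2 : ℕ, (pi1 n idx s * pi2 n idx t ^ x2).cycleType = (rho n idx).cycleType := by

  constructor
  · rintro ⟨x1, x2, hct⟩
    -- the clause-index primes are < n, hence < 2n
    have hidxlt : ∀ (j : Fin m) (b : Fin 3), ((idx j b) : ℕ) < 2 * n := fun j b => by
      have := (idx j b).isLt; omega
    have hidxne01 : ∀ j : Fin m, ((idx j 0) : ℕ) ≠ ((idx j 1) : ℕ) := fun j => by
      have := hidx j (show (0 : Fin 3) < 1 by decide); omega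
    have hidxne02 : ∀ j : Fin m, ((idx j 0) : ℕ) ≠ ((idx j 2) : ℕ) := fun j => by
      have := hidx j (show (0 : Fin 3) < 2 by decide); omega
    have hidxne12 : ∀ j : Fin m, ((idx j 1) : ℕ) ≠ ((idx j 2) : ℕ) := fun j => by
      have := hidx j (show (1 : Fin 3) < 2 by decide); omega
    -- decomposition of the product as a `shape`
    have hσ : pi1 n idx s ^ x1 * pi2 n idx t ^ x2
        = shape n idx (fun _ => x1) (fun j d => s j d.val * x1 + t j * x2) := by
      rw [pi1_eq, pi2_eq, shape_pow, shape_pow, shape_mul]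
      congr 1
      funext i; simp
    -- each entry of the rho-exponent matrix divides the product of the three clause primes
    have hKdvd : ∀ (j : Fin m) (d : Fin 6),
        (![p (idx j 0) * p (idx j 1) * p (idx j 2),
           p (idx j 0), p (idx j 1), p (idx j 2), 1, 1] d)
          ∣ p (idx j 0) * p (idx j 1) * p (idx j 2) := by
      intro j d
      fin_cases d
      · exact dvd_rfl
      · exact Dvd.dvd.mul_right (dvd_mul_right _ _) _
      · exact Dvd.dvd.mul_right (dvd_mul_left _ _) _
      · exact dvd_mul_left _ _
      · exact one_dvd _
      · exact one_dvd _
    have hq_cop_P : ∀ j : Fin m,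
        Nat.Coprime (q n j) (p (idx j 0) * p (idx j 1) * p (idx j 2)) := fun j =>
      Nat.Coprime.mul_right
        (Nat.Coprime.mul_right (coprime_q_p _ _ (hidxlt j 0)) (coprime_q_p _ _ (hidxlt j 1)))
        (coprime_q_p _ _ (hidxlt j 2))
    have hq_not_K : ∀ (j : Fin m) (d : Fin 6),
        ¬ q n j ∣ (![p (idx j 0) * p (idx j 1) * p (idx j 2),
           p (idx j 0), p (idx j 1), p (idx j 2), 1, 1] d) := by
      intro j d hdvd
      have h2 : q n j ∣ p (idx j 0) * p (idx j 1) * p (idx j 2) := hdvd.trans (hKdvd j d)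
      exact (((q_prime n j).coprime_iff_not_dvd).mp (hq_cop_P j)) h2
    -- the master counting identity
    have hfc : ∀ k : ℕ,
        ((∑ i : Fin n, if (p i.val * p (n + i.val)) ∣ x1 * k then p i.val * p (n + i.val) else 0)
          + ∑ j : Fin m, ∑ d : Fin 6,
              if r n idx j ∣ (s j d.val * x1 + t j * x2) * k then r n idx j else 0)
        = ((∑ i : Fin n, if (p i.val * p (n + i.val)) ∣ k then p i.val * p (n + i.val) else 0)
          + ∑ j : Fin m, ∑ d : Fin 6,
              if r n idx j ∣
                (![p (idx j 0) * p (idx j 1) * p (idx j 2),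
                   p (idx j 0), p (idx j 1), p (idx j 2), 1, 1] d) * k
              then r n idx j else 0) := by
      intro k
      have hconj := isConj_pow_self (Equiv.Perm.isConj_iff_cycleType_eq.mpr hct) k
      have h := fc_eq_of_isConj hconj
      rw [hσ, rho_eq, shape_pow, shape_pow, fc_shape, fc_shape] at h
      simpa using h
    -- Step 1 : q_j does not divide x1
    have hqx1 : ∀ j0 : Fin m, ¬ q n j0 ∣ x1 := by
      intro j0
      set A : ℕ := ∏ l ∈ Finset.range (2*n), p l with hAdef
      set Q : ℕ := ∏ j' ∈ Finset.univ.erase j0, q n (j' : Fin m) with hQdef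
      set k1 : ℕ := A * Q with hk1def
      have hA_L : ∀ i : Fin n, p i.val * p (n + i.val) ∣ A := by
        intro i
        exact mul_dvd_prod p (Finset.mem_range.mpr (by omega))
          (Finset.mem_range.mpr (by omega)) (by omega)
      have hA_P : ∀ j : Fin m, p (idx j 0) * p (idx j 1) * p (idx j 2) ∣ A := by
        intro j
        exact mul3_dvd_prod p (Finset.mem_range.mpr (hidxlt j 0))
          (Finset.mem_range.mpr (hidxlt j 1)) (Finset.mem_range.mpr (hidxlt j 2))
          (hidxne01 j) (hidxne02 j) (hidxne12 j)
      have hq_cop_A : ∀ j : Fin m, Nat.Coprime (q n j) A :=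
        fun j => Nat.Coprime.prod_right fun l hl =>
          coprime_q_p _ _ (Finset.mem_range.mp hl)
      have hq_cop_Q : Nat.Coprime (q n j0) Q :=
        Nat.Coprime.prod_right fun j' hj' =>
          coprime_q_q (by
            intro hc
            exact (Finset.mem_erase.mp hj').1 (Fin.val_injective hc).symm)
      have hq_cop_k1 : Nat.Coprime (q n j0) k1 := (hq_cop_A j0).mul_right hq_cop_Q
      have hq_not_k1 : ¬ q n j0 ∣ k1 := ((q_prime n j0).coprime_iff_not_dvd).mp hq_cop_k1
      have h := hfc k1
      -- first-block terms all equal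
      have hLsum : (∑ i : Fin n,
            if (p i.val * p (n + i.val)) ∣ x1 * k1 then p i.val * p (n + i.val) else 0)
          = ∑ i : Fin n,
            if (p i.val * p (n + i.val)) ∣ k1 then p i.val * p (n + i.val) else 0 := by
        refine Finset.sum_congr rfl fun i _ => ?_
        have hdvd : p i.val * p (n + i.val) ∣ k1 := (hA_L i).trans (dvd_mul_right A Q)
        rw [if_pos hdvd, if_pos (hdvd.mul_left x1)]
      rw [hLsum] at h
      have h2 := Nat.add_left_cancel h
      rw [← Finset.add_sum_erase _ _ (Finset.mem_univ j0),
          ← Finset.add_sum_erase _ _ (Finset.mem_univ j0)] at h2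
      have hrest : (∑ j' ∈ Finset.univ.erase j0, ∑ d : Fin 6,
            if r n idx j' ∣ (s j' d.val * x1 + t j' * x2) * k1 then r n idx j' else 0)
          = ∑ j' ∈ Finset.univ.erase j0, ∑ d : Fin 6,
            if r n idx j' ∣
              (![p (idx j' 0) * p (idx j' 1) * p (idx j' 2),
                 p (idx j' 0), p (idx j' 1), p (idx j' 2), 1, 1] d) * k1
            then r n idx j' else 0 := by
        refine Finset.sum_congr rfl fun j' hj' => Finset.sum_congr rfl fun d _ => ?_
        have hqQ : q n j' ∣ Q := Finset.dvd_prod_of_mem _ hj'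
        have hrk : r n idx j' ∣ k1 := by
          rw [hk1def, mul_comm A Q]
          exact mul_dvd_mul hqQ (hA_P j')
        rw [if_pos (hrk.mul_left _), if_pos (hrk.mul_left _)]
      rw [hrest] at h2
      have h3 := Nat.add_right_cancel h2
      -- the rho side at j0 vanishes
      have hρ0 : (∑ d : Fin 6,
          if r n idx j0 ∣
            (![p (idx j0 0) * p (idx j0 1) * p (idx j0 2),
               p (idx j0 0), p (idx j0 1), p (idx j0 2), 1, 1] d) * k1
          then r n idx j0 else 0) = 0 := by
        refine Finset.sum_eq_zero fun d _ => if_neg fun hdvd => ?_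
        have hq1 : q n j0 ∣ r n idx j0 := dvd_mul_right _ _
        have := (hq1.trans hdvd)
        rcases ((q_prime n j0).dvd_mul).mp this with h' | h'
        · exact hq_not_K j0 d h'
        · exact hq_not_k1 h'
      rw [hρ0] at h3
      intro hqx
      have hσall : ∀ d : Fin 6,
          (if r n idx j0 ∣ (s j0 d.val * x1 + t j0 * x2) * k1 then r n idx j0 else 0)
            = r n idx j0 := by
        intro d
        refine if_pos ?_
        have hsmodq : s j0 d.val ≡ 1 [MOD q n j0] := by
          unfold Nat.ModEq
          rw [hsq j0 d.val d.isLt, Nat.one_mod_eq_one.mpr (by have := one_lt_q n j0; omega)]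
        have htmodq : t j0 ≡ 0 [MOD q n j0] := by
          unfold Nat.ModEq
          rw [htq j0, Nat.zero_mod]
        have hE : s j0 d.val * x1 + t j0 * x2 ≡ x1 [MOD q n j0] := by
          calc s j0 d.val * x1 + t j0 * x2
              ≡ 1 * x1 + 0 * x2 [MOD q n j0] := (hsmodq.mul_right x1).add (htmodq.mul_right x2)
            _ = x1 := by ring
        have hqE : q n j0 ∣ s j0 d.val * x1 + t j0 * x2 := by
          rw [← Nat.modEq_zero_iff_dvd]
          exact hE.trans (Nat.modEq_zero_iff_dvd.mpr hqx)
        have hPk : p (idx j0 0) * p (idx j0 1) * p (idx j0 2) ∣ k1 :=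
          (hA_P j0).trans (dvd_mul_right A Q)
        exact mul_dvd_mul hqE hPk
      rw [Finset.sum_congr rfl (fun d _ => hσall d), Finset.sum_const] at h3
      have := r_pos n idx j0
      simp at h3
      omega
    -- divisibility transfer : q_j ∤ E j d
    have hqE : ∀ (j : Fin m) (d : Fin 6), ¬ q n j ∣ (s j d.val * x1 + t j * x2) := by
      intro j d hdvd
      have hsmodq : s j d.val ≡ 1 [MOD q n j] := by
        unfold Nat.ModEq
        rw [hsq j d.val d.isLt, Nat.one_mod_eq_one.mpr (by have := one_lt_q n j; omega)]
      have htmodq : t j ≡ 0 [MOD q n j] := by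
        unfold Nat.ModEq
        rw [htq j, Nat.zero_mod]
      have hE : s j d.val * x1 + t j * x2 ≡ x1 [MOD q n j] := by
        calc s j d.val * x1 + t j * x2
            ≡ 1 * x1 + 0 * x2 [MOD q n j] := (hsmodq.mul_right x1).add (htmodq.mul_right x2)
          _ = x1 := by ring
      exact hqx1 j (Nat.modEq_zero_iff_dvd.mp
        (hE.symm.trans (Nat.modEq_zero_iff_dvd.mpr hdvd)))
    -- Step 2 : p_u does not divide x1
    have hpx1 : ∀ (i0 : Fin n) (u o : ℕ),
        ((u = (i0 : ℕ) ∧ o = n + (i0 : ℕ)) ∨ (u = n + (i0 : ℕ) ∧ o = (i0 : ℕ))) →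
        ¬ p u ∣ x1 := by
      intro i0 u o hcase
      have hu2n : u < 2*n := by rcases hcase with ⟨h1, h2⟩ | ⟨h1, h2⟩ <;> (have := i0.isLt; omega)
      have ho2n : o < 2*n := by rcases hcase with ⟨h1, h2⟩ | ⟨h1, h2⟩ <;> (have := i0.isLt; omega)
      have huo : u ≠ o := by rcases hcase with ⟨h1, h2⟩ | ⟨h1, h2⟩ <;> (have := i0.isLt; omega)
      set k2 : ℕ := ∏ l ∈ (Finset.range (2*n)).erase u, p l with hk2def
      have hq_cop_k2 : ∀ j : Fin m, Nat.Coprime (q n j) k2 := fun j =>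
        Nat.Coprime.prod_right fun l hl =>
          coprime_q_p _ _ (Finset.mem_range.mp (Finset.mem_erase.mp hl).2)
      have hpu_cop_k2 : Nat.Coprime (p u) k2 :=
        Nat.Coprime.prod_right fun l hl =>
          coprime_p_p (fun hc => (Finset.mem_erase.mp hl).1 hc.symm)
      have hpu_not_k2 : ¬ p u ∣ k2 := ((p_prime u).coprime_iff_not_dvd).mp hpu_cop_k2
      have h := hfc k2
      -- both block sums vanish
      have hblockσ : (∑ j : Fin m, ∑ d : Fin 6,
          if r n idx j ∣ (s j d.val * x1 + t j * x2) * k2 then r n idx j else 0) = 0 := by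
        refine Finset.sum_eq_zero fun j _ => Finset.sum_eq_zero fun d _ => if_neg fun hdvd => ?_
        have hq1 : q n j ∣ r n idx j := dvd_mul_right _ _
        rcases ((q_prime n j).dvd_mul).mp (hq1.trans hdvd) with h' | h'
        · exact hqE j d h'
        · exact (((q_prime n j).coprime_iff_not_dvd).mp (hq_cop_k2 j)) h'
      have hblockρ : (∑ j : Fin m, ∑ d : Fin 6,
          if r n idx j ∣
            (![p (idx j 0) * p (idx j 1) * p (idx j 2),
               p (idx j 0), p (idx j 1), p (idx j 2), 1, 1] d) * k2
          then r n idx j else 0) = 0 := by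
        refine Finset.sum_eq_zero fun j _ => Finset.sum_eq_zero fun d _ => if_neg fun hdvd => ?_
        have hq1 : q n j ∣ r n idx j := dvd_mul_right _ _
        rcases ((q_prime n j).dvd_mul).mp (hq1.trans hdvd) with h' | h'
        · exact hq_not_K j d h'
        · exact (((q_prime n j).coprime_iff_not_dvd).mp (hq_cop_k2 j)) h'
      rw [hblockσ, hblockρ] at h
      have h2 := Nat.add_right_cancel h
      rw [← Finset.add_sum_erase _ _ (Finset.mem_univ i0),
          ← Finset.add_sum_erase _ _ (Finset.mem_univ i0)] at h2
      have hrest : (∑ i ∈ Finset.univ.erase i0,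
            if (p i.val * p (n + i.val)) ∣ x1 * k2 then p i.val * p (n + i.val) else 0)
          = ∑ i ∈ Finset.univ.erase i0,
            if (p i.val * p (n + i.val)) ∣ k2 then p i.val * p (n + i.val) else 0 := by
        refine Finset.sum_congr rfl fun i hi => ?_
        have hine : i ≠ i0 := (Finset.mem_erase.mp hi).1
        have hineval : (i : ℕ) ≠ (i0 : ℕ) := fun hc => hine (Fin.val_injective hc)
        have hiu : (i : ℕ) ≠ u := by
          rcases hcase with ⟨h1, h2⟩ | ⟨h1, h2⟩ <;> (have := i.isLt; have := i0.isLt; omega)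
        have hniu : n + (i : ℕ) ≠ u := by
          rcases hcase with ⟨h1, h2⟩ | ⟨h1, h2⟩ <;> (have := i.isLt; have := i0.isLt; omega)
        have hdvd : p i.val * p (n + i.val) ∣ k2 :=
          mul_dvd_prod p
            (Finset.mem_erase.mpr ⟨hiu, Finset.mem_range.mpr (by have := i.isLt; omega)⟩)
            (Finset.mem_erase.mpr ⟨hniu, Finset.mem_range.mpr (by have := i.isLt; omega)⟩)
            (by have := i.isLt; omega)
        rw [if_pos hdvd, if_pos (hdvd.mul_left x1)]
      rw [hrest] at h2
      have h3 := Nat.add_right_cancel h2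
      -- the rho term at i0 vanishes
      have hLuo : p (i0 : ℕ) * p (n + (i0 : ℕ)) = p u * p o ∨
          p (i0 : ℕ) * p (n + (i0 : ℕ)) = p o * p u := by
        rcases hcase with ⟨h1, h2⟩ | ⟨h1, h2⟩
        · left; rw [h1, h2]
        · right; rw [h1, h2]
      have hpuL : p u ∣ p (i0 : ℕ) * p (n + (i0 : ℕ)) := by
        rcases hLuo with h' | h' <;> rw [h']
        · exact dvd_mul_right _ _
        · exact dvd_mul_left _ _
      have hρ0 : (if (p (i0:ℕ) * p (n + (i0:ℕ))) ∣ k2 then p (i0:ℕ) * p (n + (i0:ℕ)) else 0)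
          = 0 := by
        refine if_neg fun hdvd => hpu_not_k2 (hpuL.trans hdvd)
      rw [hρ0] at h3
      intro hpux1
      have hpo_k2 : p o ∣ k2 :=
        Finset.dvd_prod_of_mem p
          (Finset.mem_erase.mpr ⟨huo.symm, Finset.mem_range.mpr ho2n⟩)
      have hdvd : p (i0:ℕ) * p (n + (i0:ℕ)) ∣ x1 * k2 := by
        rcases hLuo with h' | h' <;> rw [h']
        · exact mul_dvd_mul hpux1 hpo_k2
        · rw [mul_comm x1 k2]; exact mul_dvd_mul hpo_k2 hpux1
      rw [if_pos hdvd] at h3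
      have h4 := Nat.mul_pos (p_pos (i0:ℕ)) (p_pos (n + (i0:ℕ)))
      omega
    -- assembled coprimality facts
    have hp1 : ∀ i : Fin n, ¬ p (i : ℕ) ∣ x1 := fun i =>
      hpx1 i (i : ℕ) (n + (i : ℕ)) (Or.inl ⟨rfl, rfl⟩)
    have hp2 : ∀ i : Fin n, ¬ p (n + (i : ℕ)) ∣ x1 := fun i =>
      hpx1 i (n + (i : ℕ)) (i : ℕ) (Or.inr ⟨rfl, rfl⟩)
    have hcopL : ∀ i : Fin n, Nat.Coprime x1 (p (i:ℕ) * p (n + (i:ℕ))) := fun i =>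
      Nat.Coprime.mul_right
        (((p_prime _).coprime_iff_not_dvd.mpr (hp1 i)).symm)
        (((p_prime _).coprime_iff_not_dvd.mpr (hp2 i)).symm)
    have hcopR : ∀ j : Fin m, Nat.Coprime x1 (r n idx j) := by
      intro j
      refine Nat.Coprime.mul_right (((q_prime n j).coprime_iff_not_dvd.mpr (hqx1 j)).symm) ?_
      refine Nat.Coprime.mul_right (Nat.Coprime.mul_right ?_ ?_) ?_ <;>
        exact ((p_prime _).coprime_iff_not_dvd.mpr (hp1 _)).symm
    -- construct x2'
    set Pn : ℕ := ∏ l ∈ Finset.range n, p l with hPndef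
    have hPnpos : 0 < Pn := Finset.prod_pos fun l _ => p_pos l
    haveI : NeZero Pn := ⟨by omega⟩
    have hcopPn : Nat.Coprime x1 Pn :=
      Nat.Coprime.prod_right fun l hl =>
        ((p_prime l).coprime_iff_not_dvd.mpr (hp1 ⟨l, Finset.mem_range.mp hl⟩)).symm
    set x2' : ℕ := ((x1 : ZMod Pn)⁻¹ * (x2 : ZMod Pn)).val with hx2'def
    have hx2'Pn : x1 * x2' ≡ x2 [MOD Pn] := by
      have hu : IsUnit (x1 : ZMod Pn) := (ZMod.isUnit_iff_coprime x1 Pn).mpr hcopPn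
      have : ((x1 * x2' : ℕ) : ZMod Pn) = ((x2 : ℕ) : ZMod Pn) := by
        push_cast
        rw [hx2'def, ZMod.natCast_rightInverse _, ← mul_assoc, ZMod.mul_inv_of_unit _ hu,
          one_mul]
      exact (ZMod.natCast_eq_natCast_iff _ _ _).mp this
    have hx2'p : ∀ l, l < n → x1 * x2' ≡ x2 [MOD p l] := fun l hl =>
      (hx2'Pn).of_dvd (Finset.dvd_prod_of_mem p (Finset.mem_range.mpr hl))
    -- componentwise conjugacy
    have hconj : IsConj (shape n idx (fun _ => x1) (fun j d => s j d.val * x1 + t j * x2))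
        (shape n idx (fun _ => 1) (fun j d => s j d.val + t j * x2')) := by
      refine isConj_shape n idx _ _ _ _ (fun i => ?_) (fun j d => ?_)
      · exact isConj_rot (one_lt_L n i) (hcopL i) (by rw [mul_one])
      · refine isConj_rot (one_lt_r n idx j) (hcopR j) ?_
        -- x1 * (s + t*x2') ≡ s*x1 + t*x2  [MOD r j]
        have hmodq : x1 * (s j d.val + t j * x2') ≡ s j d.val * x1 + t j * x2 [MOD q n j] := by
          have hsmodq : s j d.val ≡ 1 [MOD q n j] := by
            unfold Nat.ModEq
            rw [hsq j d.val d.isLt, Nat.one_mod_eq_one.mpr (by have := one_lt_q n j; omega)]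
          have htmodq : t j ≡ 0 [MOD q n j] := by
            unfold Nat.ModEq
            rw [htq j, Nat.zero_mod]
          calc x1 * (s j d.val + t j * x2')
              ≡ x1 * (1 + 0 * x2') [MOD q n j] :=
                (hsmodq.add (htmodq.mul_right x2')).mul_left x1
            _ = 1 * x1 + 0 * x2 := by ring
            _ ≡ s j d.val * x1 + t j * x2 [MOD q n j] :=
                ((hsmodq.symm.mul_right x1).add (htmodq.symm.mul_right x2))
        have hmodp : ∀ b : Fin 3,
            x1 * (s j d.val + t j * x2') ≡ s j d.val * x1 + t j * x2 [MOD p (idx j b)] := by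
          intro b
          have htmodp : t j ≡ 1 [MOD p (idx j b)] := by
            unfold Nat.ModEq
            rw [htp j b, Nat.one_mod_eq_one.mpr (by have := one_lt_p ((idx j b) : ℕ); omega)]
          have hx2'm : x1 * x2' ≡ x2 [MOD p (idx j b)] := hx2'p _ (idx j b).isLt
          calc x1 * (s j d.val + t j * x2')
              = s j d.val * x1 + (t j) * (x1 * x2') := by ring
            _ ≡ s j d.val * x1 + 1 * (x1 * x2') [MOD p (idx j b)] :=
                ((htmodp.mul_right (x1 * x2')).add_left _)
            _ = s j d.val * x1 + x1 * x2' := by ring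
            _ ≡ s j d.val * x1 + x2 [MOD p (idx j b)] := (hx2'm.add_left _)
            _ ≡ s j d.val * x1 + t j * x2 [MOD p (idx j b)] := by
                refine Nat.ModEq.add_left _ ?_
                calc x2 = 1 * x2 := by ring
                  _ ≡ t j * x2 [MOD p (idx j b)] := htmodp.symm.mul_right x2
        have cop01 : Nat.Coprime (p (idx j 0)) (p (idx j 1)) := coprime_p_p (hidxne01 j)
        have cop012 : Nat.Coprime (p (idx j 0) * p (idx j 1)) (p (idx j 2)) :=
          Nat.Coprime.mul (coprime_p_p (hidxne02 j)) (coprime_p_p (hidxne12 j))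
        have h01 := (Nat.modEq_and_modEq_iff_modEq_mul cop01).mp ⟨hmodp 0, hmodp 1⟩
        have h012 := (Nat.modEq_and_modEq_iff_modEq_mul cop012).mp ⟨h01, hmodp 2⟩
        have hfull := (Nat.modEq_and_modEq_iff_modEq_mul (hq_cop_P j)).mp ⟨hmodq, h012⟩
        exact hfull
    -- conclude
    refine ⟨x2', ?_⟩
    have e1 : pi1 n idx s * pi2 n idx t ^ x2'
        = shape n idx (fun _ => 1) (fun j d => s j d.val + t j * x2') := by
      rw [pi1_eq, pi2_eq, shape_pow, shape_mul]
      congr 1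
      funext i; simp
    rw [e1]
    have := (Equiv.Perm.isConj_iff_cycleType_eq).mp hconj
    rw [← this, ← hσ]
    exact hct
  · rintro ⟨x2, h⟩
    exact ⟨1, x2, by simpa [pow_one] using h⟩

end HittingSet
end
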